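/- An inverse limit of acyclically closed groups is acyclically closed. In particular, the nilpotent completion F^nil = lim← F/Γ^k F of a finitely generated free group F is acyclically closed. -/

import Mathlib

open Monoid

/-- The projection `G ∗ F_n → H₁(F_n)` killing `G`; a monomial is *acyclic*
if it lies in its kernel. -/
def acyProj (G : Type*) [Group G] (n : ℕ) :
    Coprod G (FreeGroup (Fin n)) →* Abelianization (FreeGroup (Fin n)) :=
  Coprod.lift 1 Abelianization.of

/-- An *acyclic system* over `G`: equations `x_i = w_i(x_1,…,x_n)` with each
monomial `w_i ∈ G ∗ F_n` acyclic. -/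
def IsAcyclicSystem {G : Type*} [Group G] {n : ℕ}
    (w : Fin n → Coprod G (FreeGroup (Fin n))) : Prop :=
  ∀ i, acyProj G n (w i) = 1

/-- Substitution of values `g : Fin n → G` for the variables in a monomial. -/
def acyEval {G : Type*} [Group G] {n : ℕ} (g : Fin n → G) :
    Coprod G (FreeGroup (Fin n)) →* G :=
  Coprod.lift (MonoidHom.id G) (FreeGroup.lift g)

/-- `g` is a solution of the system `x_i = w_i`. -/
def IsSolution {G : Type*} [Group G] {n : ℕ}
    (w : Fin n → Coprod G (FreeGroup (Fin n))) (g : Fin n → G) : Prop :=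
  ∀ i, acyEval g (w i) = g i

/-- A group is *acyclically closed* if every acyclic system over it has a
unique solution. -/
def AcyclicallyClosed (G : Type*) [Group G] : Prop :=
  ∀ (n : ℕ) (w : Fin n → Coprod G (FreeGroup (Fin n))),
    IsAcyclicSystem w → ∃! g : Fin n → G, IsSolution w g

/-- The inverse limit of a system of groups indexed by a preorder, realized as
the subgroup of compatible sequences in the product. -/
def invLimit {ι : Type*} [Preorder ι] (G : ι → Type*) [∀ i, Group (G i)]
    (f : ∀ i j, i ≤ j → (G j →* G i)) : Subgroup (∀ i, G i) where
  carrier := {x | ∀ (i j : ι) (h : i ≤ j), f i j h (x j) = x i}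
  one_mem' := by intro i j h; simp
  mul_mem' := by
    intro a b ha hb i j h
    simp only [Pi.mul_apply, map_mul, ha i j h, hb i j h]
  inv_mem' := by
    intro a ha i j h
    simp only [Pi.inv_apply, map_inv, ha i j h]

/-- The transition map `F/Γ^{l+1} → F/Γ^{k+1}` between nilpotent quotients of a
group, for `k ≤ l`. -/
def nilTrans (F : Type*) [Group F] (k l : ℕ) (h : k ≤ l) :
    (F ⧸ (⊤ : Subgroup F).lowerCentralSeries l) →* (F ⧸ (⊤ : Subgroup F).lowerCentralSeries k) :=
  QuotientGroup.map _ _ (MonoidHom.id F)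
    (fun x hx => Subgroup.lowerCentralSeries_antitone (⊤ : Subgroup F) h hx)

/-! ### Auxiliary lemmas -/

lemma acyProj_map {G H : Type*} [Group G] [Group H] (π : G →* H) {n : ℕ} :
    (acyProj H n).comp (Coprod.map π (MonoidHom.id _)) = acyProj G n := by
  apply Coprod.hom_ext
  · ext x; simp [acyProj, Coprod.map]
  · ext x; simp [acyProj, Coprod.map]

lemma acyEval_map {G H : Type*} [Group G] [Group H] (π : G →* H) {n : ℕ} (g : Fin n → G) :
    (acyEval (fun i => π (g i))).comp (Coprod.map π (MonoidHom.id _)) = π.comp (acyEval g) := by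
  apply Coprod.hom_ext
  · ext x; simp [acyEval, Coprod.map]
  · ext x; simp [acyEval, Coprod.map]

lemma acyEval_map_apply {G H : Type*} [Group G] [Group H] (π : G →* H) {n : ℕ}
    (g : Fin n → G) (u : Coprod G (FreeGroup (Fin n))) :
    acyEval (fun i => π (g i)) (Coprod.map π (MonoidHom.id _) u) = π (acyEval g u) :=
  DFunLike.congr_fun (acyEval_map π g) u

lemma isSolution_map {G H : Type*} [Group G] [Group H] (π : G →* H) {n : ℕ}
    {w : Fin n → Coprod G (FreeGroup (Fin n))} {g : Fin n → G} (hg : IsSolution w g) :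
    IsSolution (fun i => Coprod.map π (MonoidHom.id _) (w i)) (fun i => π (g i)) := by
  intro i
  rw [acyEval_map_apply, hg i]

open scoped IsMulCommutative in
/-- Key central-shift lemma: evaluating an acyclic word at `g * c` with `c`
central gives the same value as at `g`. -/
lemma acyEval_mul_central {G : Type*} [Group G] {n : ℕ} (g c : Fin n → G)
    (hc : ∀ j, c j ∈ Subgroup.center G) {w : Coprod G (FreeGroup (Fin n))}
    (hw : acyProj G n w = 1) :
    acyEval (fun j => g j * c j) w = acyEval g w := by
  set c' : Fin n → Subgroup.center G := fun j => ⟨c j, hc j⟩ with hc'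
  set δ : Coprod G (FreeGroup (Fin n)) →* G :=
    ((Subgroup.center G).subtype.comp
      ((Abelianization.lift (FreeGroup.lift c')).comp (acyProj G n))) with hδ
  have hδc : ∀ u x, δ u * x = x * δ u := by
    intro u x
    have : (((Abelianization.lift (FreeGroup.lift c')).comp (acyProj G n)) u : G)
        ∈ Subgroup.center G := SetLike.coe_mem _
    exact ((Subgroup.mem_center_iff.mp this) x).symm
  set θ : Coprod G (FreeGroup (Fin n)) →* G :=
    MonoidHom.mk' (fun u => acyEval g u * δ u) (by
      intro a b
      simp only [map_mul]
      rw [mul_assoc (acyEval g a) (δ a) (acyEval g b * δ b), hδc a (acyEval g b * δ b),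
        mul_assoc (acyEval g b) (δ b) (δ a), ← hδc a (δ b), mul_assoc]) with hθ
  have key : acyEval (fun j => g j * c j) = θ := by
    apply Coprod.hom_ext
    · ext x
      simp [hθ, hδ, acyEval, acyProj]
    · ext j
      simp [hθ, hδ, acyEval, acyProj, hc']
  rw [key]
  show acyEval g w * δ w = acyEval g w
  rw [hδ]
  simp [MonoidHom.comp_apply, hw]

/-- A group with a surjective homomorphism with central kernel onto an
acyclically closed group is acyclically closed. -/
lemma centralExt_acyclicallyClosed {E Q : Type*} [Group E] [Group Q] (π : E →* Q)
    (hsurj : Function.Surjective π) (hker : ∀ e, π e = 1 → e ∈ Subgroup.center E)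
    (hQ : AcyclicallyClosed Q) : AcyclicallyClosed E := by
  intro n w hw
  set W : Fin n → Coprod Q (FreeGroup (Fin n)) :=
    fun i => Coprod.map π (MonoidHom.id _) (w i) with hW
  have hWacy : IsAcyclicSystem W := by
    intro i
    have := DFunLike.congr_fun (acyProj_map π (n := n)) (w i)
    simp only [MonoidHom.comp_apply] at this
    rw [hW]; simpa [this] using hw i
  obtain ⟨gbar, hgbar, hgbaru⟩ := hQ n W hWacy
  choose g0 hg0 using fun i => hsurj (gbar i)
  have hdef : ∀ i, (g0 i)⁻¹ * acyEval g0 (w i) ∈ Subgroup.center E := by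
    intro i
    apply hker
    have h1 : π (acyEval g0 (w i)) = gbar i := by
      have := acyEval_map_apply π g0 (w i)
      simp only [hg0] at this
      rw [← this, hgbar i]
    simp [h1, hg0 i]
  set z : Fin n → E := fun i => (g0 i)⁻¹ * acyEval g0 (w i) with hz
  refine ⟨fun i => g0 i * z i, ?_, ?_⟩
  · intro i
    rw [acyEval_mul_central g0 z hdef (hw i), hz]
    group
  · intro g' hg'
    -- π ∘ g' is a solution of W, hence equals gbar
    have hproj : (fun i => π (g' i)) = gbar := by
      apply hgbaru
      exact isSolution_map π hg'
    -- so g' = g0 * c with c central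
    have hcent : ∀ i, (g0 i)⁻¹ * g' i ∈ Subgroup.center E := by
      intro i
      apply hker
      have : π (g' i) = gbar i := congrFun hproj i
      simp [this, hg0 i]
    have hrepr : g' = fun i => g0 i * ((g0 i)⁻¹ * g' i) := by
      funext i; group
    have heval : ∀ i, acyEval g' (w i) = acyEval g0 (w i) := by
      intro i
      conv_lhs => rw [hrepr]
      exact acyEval_mul_central g0 _ hcent (hw i)
    funext i
    have := hg' i
    rw [heval i] at this
    rw [← this, hz]
    group

/-- Subsingleton groups are acyclically closed. -/
lemma subsingleton_acyclicallyClosed {G : Type*} [Group G] [Subsingleton G] :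
    AcyclicallyClosed G := by
  intro n w _
  exact ⟨fun _ => 1, fun i => Subsingleton.elim _ _, fun g' _ => funext fun i => Subsingleton.elim _ _⟩

/-- Nilpotent quotients of any group are acyclically closed. -/
lemma nilQuot_acyclicallyClosed (F : Type*) [Group F] (k : ℕ) :
    AcyclicallyClosed (F ⧸ (⊤ : Subgroup F).lowerCentralSeries k) := by
  induction k with
  | zero =>
    have : Subsingleton (F ⧸ (⊤ : Subgroup F).lowerCentralSeries 0) := by
      rw [Subgroup.lowerCentralSeries_zero]
      exact QuotientGroup.subsingleton_quotient_top
    exact subsingleton_acyclicallyClosed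
  | succ k ih =>
    apply centralExt_acyclicallyClosed (nilTrans F k (k+1) k.le_succ) ?_ ?_ ih
    · intro q
      obtain ⟨a, rfl⟩ := QuotientGroup.mk_surjective q
      exact ⟨QuotientGroup.mk a, rfl⟩
    · intro e he
      obtain ⟨a, rfl⟩ := QuotientGroup.mk_surjective e
      have ha : a ∈ (⊤ : Subgroup F).lowerCentralSeries k := by
        have : ((QuotientGroup.mk a : F ⧸ (⊤ : Subgroup F).lowerCentralSeries k)) = 1 := he
        exact (QuotientGroup.eq_one_iff a).mp this
      rw [Subgroup.mem_center_iff]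
      intro q
      obtain ⟨b, rfl⟩ := QuotientGroup.mk_surjective q
      rw [← QuotientGroup.mk_mul, ← QuotientGroup.mk_mul]
      apply (QuotientGroup.eq (s := (⊤ : Subgroup F).lowerCentralSeries (k+1))).mpr
      have : a * b * a⁻¹ * b⁻¹ ∈ (⊤ : Subgroup F).lowerCentralSeries (k+1) :=
        Subgroup.lowerCentralSeries_isDescendingCentralSeries.2 a k ha b
      have h2 : (b * a)⁻¹ * (a * b) = (a * b)⁻¹ * (a * b * a⁻¹ * b⁻¹) * ((a * b)⁻¹)⁻¹ := by
        group
      rw [h2]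
      exact (Subgroup.lowerCentralSeries_normal ⊤ (k+1)).conj_mem _ this _

/-- Inverse limits of acyclically closed groups are acyclically closed. -/
lemma invLimit_AC {ι : Type*} [Preorder ι] (G : ι → Type*) [∀ i, Group (G i)]
    (f : ∀ i j, i ≤ j → (G j →* G i)) (hAC : ∀ i, AcyclicallyClosed (G i)) :
    AcyclicallyClosed ↥(invLimit G f) := by
  intro n w hw
  set p : ∀ i, ↥(invLimit G f) →* G i :=
    fun i => (Pi.evalMonoidHom G i).comp (invLimit G f).subtype with hp
  have hpcomp : ∀ i j (h : i ≤ j) (x : ↥(invLimit G f)), f i j h (p j x) = p i x :=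
    fun i j h x => x.2 i j h
  have key : ∀ i : ι, ∃! s : Fin n → G i,
      IsSolution (fun k => Coprod.map (p i) (MonoidHom.id _) (w k)) s := by
    intro i
    apply hAC i
    intro k
    have h1 := DFunLike.congr_fun (acyProj_map (p i) (n := n)) (w k)
    simp only [MonoidHom.comp_apply] at h1
    rw [h1]; exact hw k
  choose s hs hsu using key
  have hcompat : ∀ i j (h : i ≤ j) (k : Fin n), f i j h (s j k) = s i k := by
    intro i j h k
    have hsol : IsSolution (fun k => Coprod.map (p i) (MonoidHom.id _) (w k))
        (fun k => f i j h (s j k)) := by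
      intro k
      have hfac : Coprod.map (p i) (MonoidHom.id (FreeGroup (Fin n))) (w k) =
          Coprod.map (f i j h) (MonoidHom.id _)
            (Coprod.map (p j) (MonoidHom.id _) (w k)) := by
        have h2 : (Coprod.map (f i j h) (MonoidHom.id (FreeGroup (Fin n)))).comp
            (Coprod.map (p j) (MonoidHom.id _)) = Coprod.map (p i) (MonoidHom.id _) := by
          rw [Coprod.map_comp_map]
          have h3 : (f i j h).comp (p j) = p i := by ext x; exact hpcomp i j h x
          rw [MonoidHom.id_comp, h3]
        rw [← h2]; rfl
      show acyEval (fun k => f i j h (s j k))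
        (Coprod.map (p i) (MonoidHom.id _) (w k)) = f i j h (s j k)
      rw [hfac, acyEval_map_apply, hs j k]
    exact congrFun (hsu i _ hsol) k
  refine ⟨fun k => ⟨fun i => s i k, fun i j h => hcompat i j h k⟩, ?_, ?_⟩
  · intro k
    apply Subtype.ext
    funext i
    show p i (acyEval (fun k => ⟨fun i => s i k, fun i j h => hcompat i j h k⟩) (w k)) = s i k
    have h1 := acyEval_map_apply (p i)
      (fun k => (⟨fun i => s i k, fun i j h => hcompat i j h k⟩ : ↥(invLimit G f))) (w k)
    have h2 : (fun k => p i ((⟨fun i => s i k, fun i j h => hcompat i j h k⟩ :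
        ↥(invLimit G f)))) = s i := funext fun k => rfl
    rw [h2] at h1
    rw [← h1]
    exact hs i k
  · intro g' hg'
    funext k
    apply Subtype.ext
    funext i
    show p i (g' k) = s i k
    exact congrFun (hsu i _ (isSolution_map (p i) hg')) k

/-- An inverse limit of acyclically closed groups is acyclically closed; in
particular, the nilpotent completion `F^nil = lim← F/Γ^k F` of a finitely
generated free group is acyclically closed. -/
theorem invLimit_acyclicallyClosed :
    (∀ (ι : Type) [Preorder ι] (G : ι → Type) [∀ i, Group (G i)]
        (f : ∀ i j, i ≤ j → (G j →* G i)),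
        (∀ i, f i i le_rfl = MonoidHom.id (G i)) →
        (∀ i j k (hij : i ≤ j) (hjk : j ≤ k),
          (f i j hij).comp (f j k hjk) = f i k (hij.trans hjk)) →
        (∀ i, AcyclicallyClosed (G i)) →
        AcyclicallyClosed ↥(invLimit G f)) ∧
    ∀ m : ℕ, AcyclicallyClosed
      ↥(invLimit (fun k : ℕ => FreeGroup (Fin m) ⧸ (⊤ : Subgroup (FreeGroup (Fin m))).lowerCentralSeries k)
        (fun k l h => nilTrans (FreeGroup (Fin m)) k l h)) := by
  constructor
  · intro ι _ G _ f _ _ hAC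
    exact invLimit_AC G f hAC
  · intro m
    exact invLimit_AC _ _ (fun k => nilQuot_acyclicallyClosed (FreeGroup (Fin m)) k)
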